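/- Discrete fractional Grönwall-type coercivity: for any sequence (v^n) of reals, the L1 discrete Caputo operator satisfies v^n · D^α_τ v^n ≥ (1/2) D^α_τ (v^2)^n, where (v^2)^n = (v^n)^2. -/
import Mathlib


/-- Coefficient `ζ^{(α)}_k = (k+1)^{1-α} - k^{1-α}` of the L1 scheme. -/
noncomputable def zetaW (α : ℝ) (k : ℕ) : ℝ :=
  ((k : ℝ) + 1) ^ (1 - α) - (k : ℝ) ^ (1 - α)

/-- L1 discrete Caputo derivative at step `n ≥ 1` with time step `τ`. -/
noncomputable def l1Caputo (α τ : ℝ) (v : ℕ → ℝ) (n : ℕ) : ℝ :=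
  (1 / (τ ^ α * Real.Gamma (2 - α))) *
    ∑ j ∈ Finset.Icc 1 n, zetaW α (n - j) * (v j - v (j - 1))

lemma zetaW_nonneg (α : ℝ) (hα1 : α < 1) (k : ℕ) : 0 ≤ zetaW α k := by
  have : (k : ℝ) ^ (1 - α) ≤ ((k : ℝ) + 1) ^ (1 - α) :=
    Real.rpow_le_rpow (by positivity) (by linarith) (by linarith)
  simpa [zetaW] using sub_nonneg.mpr this

lemma zetaW_anti (α : ℝ) (hα0 : 0 < α) (hα1 : α < 1) (k : ℕ) :
    zetaW α (k + 1) ≤ zetaW α k := by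
  have hcon := Real.concaveOn_rpow (p := 1 - α) (by linarith) (by linarith)
  have h := hcon.2 (Set.mem_Ici.mpr (by positivity : (0:ℝ) ≤ (k : ℝ)))
    (Set.mem_Ici.mpr (by positivity : (0:ℝ) ≤ (k : ℝ) + 2))
    (by norm_num : (0:ℝ) ≤ 1/2) (by norm_num : (0:ℝ) ≤ 1/2)
    (by norm_num : (1/2 : ℝ) + 1/2 = 1)
  simp only [smul_eq_mul] at h
  have hmid : (1/2 : ℝ) * (k : ℝ) + (1/2 : ℝ) * ((k : ℝ) + 2) = (k : ℝ) + 1 := by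
    ring
  rw [hmid] at h
  simp only [zetaW, Nat.cast_add, Nat.cast_one]
  have : ((k : ℝ) + 1 + 1) = (k : ℝ) + 2 := by ring
  rw [this]
  nlinarith [h]

/-- Key Abel-summation positivity lemma. -/
lemma abel_key (b u : ℕ → ℝ) (hb : ∀ k, 0 ≤ b k) (hmono : ∀ k, b (k + 1) ≤ b k)
    (hu : ∀ j, 0 ≤ u j) (n : ℕ) (hn : 1 ≤ n) (hun : u n = 0) :
    0 ≤ ∑ i ∈ Finset.range n, b (n - 1 - i) * (u i - u (i + 1)) := by
  have split : ∀ i ∈ Finset.range n,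
      b (n - 1 - i) * (u i - u (i + 1)) = b (n - 1 - i) * u i - b (n - 1 - i) * u (i + 1) := by
    intro i _; ring
  rw [Finset.sum_congr rfl split, Finset.sum_sub_distrib]
  -- second sum: reindex
  have h2 : ∑ i ∈ Finset.range n, b (n - 1 - i) * u (i + 1)
      = ∑ i ∈ Finset.range (n + 1), b (n - i) * u i - b n * u 0 := by
    rw [Finset.sum_range_succ' (fun i => b (n - i) * u i) n]
    have : ∀ i ∈ Finset.range n, b (n - (i + 1)) * u (i + 1) = b (n - 1 - i) * u (i + 1) := by
      intro i _
      congr 2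
      omega
    rw [Finset.sum_congr rfl this]
    simp
  rw [h2]
  rw [Finset.sum_range_succ (fun i => b (n - i) * u i) n]
  simp only [Nat.sub_self, hun, mul_zero, add_zero]
  have key : ∑ i ∈ Finset.range n, b (n - i) * u i ≤ ∑ i ∈ Finset.range n, b (n - 1 - i) * u i := by
    apply Finset.sum_le_sum
    intro i hi
    have hi' : i < n := Finset.mem_range.mp hi
    have hb' : b (n - i) ≤ b (n - 1 - i) := by
      have : n - i = (n - 1 - i) + 1 := by omega
      rw [this]
      exact hmono _
    exact mul_le_mul_of_nonneg_right hb' (hu i)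
  nlinarith [mul_nonneg (hb n) (hu 0)]

theorem l1Caputo_coercivity (α τ : ℝ) (hα0 : 0 < α) (hα1 : α < 1) (hτ : 0 < τ)
    (v : ℕ → ℝ) (n : ℕ) (hn : 1 ≤ n) :
    (1 / 2) * l1Caputo α τ (fun m => (v m) ^ 2) n ≤ v n * l1Caputo α τ v n := by
  set C : ℝ := 1 / (τ ^ α * Real.Gamma (2 - α)) with hC
  have hCpos : 0 ≤ C := by
    have h1 : (0:ℝ) < τ ^ α := Real.rpow_pos_of_pos hτ α
    have h2 : 0 < Real.Gamma (2 - α) := Real.Gamma_pos_of_pos (by linarith)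
    positivity
  unfold l1Caputo
  rw [← hC]
  -- reduce to the nonnegativity of the difference sum
  have key : 0 ≤ ∑ j ∈ Finset.Icc 1 n, zetaW α (n - j) *
      ((v n - v (j - 1)) ^ 2 - (v n - v j) ^ 2) := by
    have hIcc : Finset.Icc 1 n = Finset.Ico 1 (n + 1) := by
      rw [Finset.Ico_add_one_right_eq_Icc]
    rw [hIcc, Finset.sum_Ico_eq_sum_range]
    have hform : ∀ i ∈ Finset.range (n + 1 - 1),
        zetaW α (n - (1 + i)) * ((v n - v (1 + i - 1)) ^ 2 - (v n - v (1 + i)) ^ 2)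
        = zetaW α (n - 1 - i) * ((v n - v i) ^ 2 - (v n - v (i + 1)) ^ 2) := by
      intro i _
      have e1 : 1 + i - 1 = i := by omega
      have e2 : n - (1 + i) = n - 1 - i := by omega
      have e3 : 1 + i = i + 1 := by omega
      rw [e1, e2, e3]
    rw [Finset.sum_congr rfl hform]
    have hnn : n + 1 - 1 = n := by omega
    rw [hnn]
    exact abel_key (fun k => zetaW α k) (fun i => (v n - v i) ^ 2)
      (zetaW_nonneg α hα1) (zetaW_anti α hα0 hα1)
      (fun j => sq_nonneg _) n hn (by simp)
  have hterm : ∀ j ∈ Finset.Icc 1 n,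
      zetaW α (n - j) * ((v n - v (j - 1)) ^ 2 - (v n - v j) ^ 2)
      = 2 * (v n * (zetaW α (n - j) * (v j - v (j - 1)))
        - (1/2) * (zetaW α (n - j) * ((v j) ^ 2 - (v (j - 1)) ^ 2))) := by
    intro j _; ring
  rw [Finset.sum_congr rfl hterm] at key
  rw [← Finset.mul_sum, Finset.sum_sub_distrib, ← Finset.mul_sum, ← Finset.mul_sum] at key
  set A : ℝ := ∑ j ∈ Finset.Icc 1 n, zetaW α (n - j) * (v j - v (j - 1)) with hA
  set B : ℝ := ∑ j ∈ Finset.Icc 1 n, zetaW α (n - j) * ((v j) ^ 2 - (v (j - 1)) ^ 2) with hB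
  have hkey : (1/2) * B ≤ v n * A := by linarith
  calc (1/2) * (C * B) = C * ((1/2) * B) := by ring
    _ ≤ C * (v n * A) := mul_le_mul_of_nonneg_left hkey hCpos
    _ = v n * (C * A) := by ring
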